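/- Let H be a nonempty hypothesis class and G a nonempty set of groups, each with P_g > 0. If a measurable predictor p* ∈ P is an ε-optimal solution to the step-calibration multi-objective learning problem, i.e. sup_{σ,v,w,h,g} E_{(x,y)~D}[ℓ_{σ,v,w,h,g}(p*,(x,y))] ≤ inf_{p ∈ P} sup_{σ,v,w,h,g} E_{(x,y)~D}[ℓ_{σ,v,w,h,g}(p,(x,y))] + ε, then p* is (G,H,ε)-step calibrated. -/

import Mathlib

open MeasureTheory ProbabilityTheory Set

noncomputable section

/-- Real value of a Boolean label. -/
def lab (y : Bool) : ℝ := if y then 1 else 0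

/-- Conditional expectation of `f` under `D`, given that the group membership
function `g` evaluates to `true` on the context. -/
def condE {X : Type*} [MeasurableSpace X] (D : Measure (X × Bool)) (g : X → Bool)
    (f : X × Bool → ℝ) : ℝ :=
  ∫ z, f z ∂(D[|{z : X × Bool | g z.1 = true}])

/-- Probability of group `g` under `D`. -/
def Pg {X : Type*} [MeasurableSpace X] (D : Measure (X × Bool)) (g : X → Bool) : ℝ :=
  (D {z : X × Bool | g z.1 = true}).toReal

/-- The set of all partition sums `∑ |f(z_{j+1}) - f(z_j)|` over finite partitions
`0 = z_0 < z_1 < ⋯ < z_m = 1` of `[0,1]`.  `V(f) ≤ C` iff every element is `≤ C`. -/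
def partitionSums (f : ℝ → ℝ) : Set ℝ :=
  {S | ∃ (m : ℕ) (z : ℕ → ℝ), z 0 = 0 ∧ z m = 1 ∧ (∀ i < m, z i < z (i + 1)) ∧
      S = ∑ i ∈ Finset.range m, |f (z (i + 1)) - f (z i)|}

/-- The step-calibration objective `ℓ_{σ,v,w,h,g}` evaluated (in expectation over `D`)
at the predictor `p`. -/
def objective {X : Type*} [MeasurableSpace X] (D : Measure (X × Bool))
    (σ v w : ℝ) (h : X → ℝ) (g : X → Bool) (p : X → ℝ) : ℝ :=
  ∫ z, σ * (lab z.2 - p z.1) / Real.sqrt (Pg D g) * (if p z.1 ≤ v then 1 else 0) *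
      (if h z.1 ≤ w then 1 else 0) * (if g z.1 = true then 1 else 0) ∂D

/-- The worst-case (supremum) objective value of a predictor `p` over all
`σ ∈ {+1,-1}`, `v, w ∈ [0,1]`, `h ∈ H`, `g ∈ G`. -/
def supObj {X : Type*} [MeasurableSpace X] (D : Measure (X × Bool))
    (G : Set (X → Bool)) (H : Set (X → ℝ)) (p : X → ℝ) : ℝ :=
  sSup {r | ∃ σ ∈ ({1, -1} : Set ℝ), ∃ v ∈ Icc (0:ℝ) 1, ∃ w ∈ Icc (0:ℝ) 1,
    ∃ h ∈ H, ∃ g ∈ G, r = objective D σ v w h g p}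

namespace Stmt5Aux

variable {X : Type*} [MeasurableSpace X]

lemma measS {g : X → Bool} (hg : Measurable g) :
    MeasurableSet {z : X × Bool | g z.1 = true} :=
  (hg.comp measurable_fst) (measurableSet_singleton true)

lemma lab_mem (y : Bool) : lab y ∈ Icc (0:ℝ) 1 := by
  unfold lab; split <;> norm_num

lemma Pg_nonneg (D : Measure (X × Bool)) (g : X → Bool) : 0 ≤ Pg D g :=
  ENNReal.toReal_nonneg

lemma Pg_le_one (D : Measure (X × Bool)) [IsProbabilityMeasure D] (g : X → Bool) :
    Pg D g ≤ 1 := by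
  unfold Pg
  exact ENNReal.toReal_le_of_le_ofReal zero_le_one (by simpa using prob_le_one)

/-- The objective rewritten as a constant times a set integral over the group event. -/
lemma objective_eq_setIntegral (D : Measure (X × Bool)) (σ v w : ℝ)
    (h : X → ℝ) {g : X → Bool} (hg : Measurable g) (q : X → ℝ) :
    objective D σ v w h g q =
      (σ / Real.sqrt (Pg D g)) *
        ∫ z in {z : X × Bool | g z.1 = true},
          (lab z.2 - q z.1) * (if q z.1 ≤ v then 1 else 0) *
            (if h z.1 ≤ w then 1 else 0) ∂D := by
  rw [objective, ← integral_indicator (measS hg), ← integral_const_mul]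
  congr 1
  funext z
  by_cases hz : g z.1 = true
  · simp only [Set.indicator, mem_setOf_eq, hz, if_pos, if_true]
    ring
  · simp only [Set.indicator, mem_setOf_eq, hz, if_false]
    simp [hz]

lemma integrable_objective_integrand (D : Measure (X × Bool)) [IsProbabilityMeasure D]
    (σ v w : ℝ) {h : X → ℝ} (hh : Measurable h)
    {g : X → Bool} (hg : Measurable g) {q : X → ℝ} (hq : Measurable q)
    (hqr : ∀ x, q x ∈ Icc (0:ℝ) 1) :
    Integrable (fun z : X × Bool =>
      σ * (lab z.2 - q z.1) / Real.sqrt (Pg D g) * (if q z.1 ≤ v then 1 else 0) *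
        (if h z.1 ≤ w then 1 else 0) * (if g z.1 = true then 1 else 0)) D := by
  have mlab0 : Measurable (lab ∘ Prod.snd : X × Bool → ℝ) :=
    Measurable.comp measurable_from_top measurable_snd
  have mlab : Measurable (fun z : X × Bool => lab z.2) := mlab0
  have m0 : Measurable (fun z : X × Bool => σ * (lab z.2 - q z.1) / Real.sqrt (Pg D g)) :=
    (measurable_const.mul (mlab.sub (hq.comp measurable_fst))).div_const _
  have m1 : Measurable (fun z : X × Bool => (if q z.1 ≤ v then (1:ℝ) else 0)) :=
    Measurable.ite (measurableSet_le (hq.comp measurable_fst) measurable_const)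
      measurable_const measurable_const
  have m2 : Measurable (fun z : X × Bool => (if h z.1 ≤ w then (1:ℝ) else 0)) :=
    Measurable.ite (measurableSet_le (hh.comp measurable_fst) measurable_const)
      measurable_const measurable_const
  have m3 : Measurable (fun z : X × Bool => (if g z.1 = true then (1:ℝ) else 0)) :=
    Measurable.ite (measS hg) measurable_const measurable_const
  have hmeas : Measurable (fun z : X × Bool =>
      σ * (lab z.2 - q z.1) / Real.sqrt (Pg D g) * (if q z.1 ≤ v then 1 else 0) *
        (if h z.1 ≤ w then 1 else 0) * (if g z.1 = true then 1 else 0)) :=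
    ((m0.mul m1).mul m2).mul m3
  refine (integrable_const (|σ| * 1 / Real.sqrt (Pg D g))).mono'
    hmeas.aestronglyMeasurable (ae_of_all _ fun z => ?_)
  have h1 : |lab z.2 - q z.1| ≤ 1 := by
    have := lab_mem z.2
    have := hqr z.1
    rw [abs_le]
    constructor <;> [linarith [this.2, (lab_mem z.2).1]; linarith [this.1, (lab_mem z.2).2]]
  have hs : (0:ℝ) ≤ Real.sqrt (Pg D g) := Real.sqrt_nonneg _
  have e1 : |(if q z.1 ≤ v then (1:ℝ) else 0)| ≤ 1 := by split <;> norm_num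
  have e2 : |(if h z.1 ≤ w then (1:ℝ) else 0)| ≤ 1 := by split <;> norm_num
  have e3 : |(if g z.1 = true then (1:ℝ) else 0)| ≤ 1 := by split <;> norm_num
  rw [Real.norm_eq_abs, abs_mul, abs_mul, abs_mul, abs_div, abs_mul, abs_of_nonneg hs]
  calc |σ| * |lab z.2 - q z.1| / Real.sqrt (Pg D g) * |(if q z.1 ≤ v then (1:ℝ) else 0)| *
        |(if h z.1 ≤ w then (1:ℝ) else 0)| * |(if g z.1 = true then (1:ℝ) else 0)|
      ≤ |σ| * |lab z.2 - q z.1| / Real.sqrt (Pg D g) * 1 * 1 * 1 := by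
        gcongr <;> positivity
    _ = |σ| * |lab z.2 - q z.1| / Real.sqrt (Pg D g) := by ring
    _ ≤ |σ| * 1 / Real.sqrt (Pg D g) := by gcongr

/-- Each objective value has absolute value at most 1. -/
lemma abs_objective_le_one (D : Measure (X × Bool)) [IsProbabilityMeasure D]
    {σ : ℝ} (hσ : σ = 1 ∨ σ = -1) (v w : ℝ) {h : X → ℝ} (hh : Measurable h)
    {g : X → Bool} (hg : Measurable g) {q : X → ℝ} (hq : Measurable q)
    (hqr : ∀ x, q x ∈ Icc (0:ℝ) 1) :
    |objective D σ v w h g q| ≤ 1 := by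
  set S := {z : X × Bool | g z.1 = true} with hS
  have hSm : MeasurableSet S := measS hg
  have hσ1 : |σ| = 1 := by rcases hσ with rfl | rfl <;> norm_num
  have hbound : ∀ z : X × Bool,
      ‖σ * (lab z.2 - q z.1) / Real.sqrt (Pg D g) * (if q z.1 ≤ v then 1 else 0) *
        (if h z.1 ≤ w then 1 else 0) * (if g z.1 = true then 1 else 0)‖ ≤
      S.indicator (fun _ => (Real.sqrt (Pg D g))⁻¹) z := by
    intro z
    by_cases hz : g z.1 = true
    · have hzS : z ∈ S := hz
      rw [Set.indicator_of_mem hzS]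
      have h1 : |lab z.2 - q z.1| ≤ 1 := by
        have hl := lab_mem z.2
        have hq' := hqr z.1
        rw [abs_le]
        constructor <;> [linarith [hq'.2, hl.1]; linarith [hq'.1, hl.2]]
      have hs : (0:ℝ) ≤ Real.sqrt (Pg D g) := Real.sqrt_nonneg _
      have e1 : |(if q z.1 ≤ v then (1:ℝ) else 0)| ≤ 1 := by split <;> norm_num
      have e2 : |(if h z.1 ≤ w then (1:ℝ) else 0)| ≤ 1 := by split <;> norm_num
      rw [Real.norm_eq_abs, abs_mul, abs_mul, abs_mul, abs_div, abs_mul, hσ1, hz,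
        if_pos rfl, abs_of_nonneg hs, abs_one]
      have key : 1 * |lab z.2 - q z.1| / Real.sqrt (Pg D g) ≤ (Real.sqrt (Pg D g))⁻¹ := by
        rw [one_mul, div_eq_mul_inv]
        calc |lab z.2 - q z.1| * (Real.sqrt (Pg D g))⁻¹ ≤ 1 * (Real.sqrt (Pg D g))⁻¹ := by
              gcongr
          _ = (Real.sqrt (Pg D g))⁻¹ := one_mul _
      calc 1 * |lab z.2 - q z.1| / Real.sqrt (Pg D g) * |(if q z.1 ≤ v then (1:ℝ) else 0)| *
            |(if h z.1 ≤ w then (1:ℝ) else 0)| * 1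
          ≤ 1 * |lab z.2 - q z.1| / Real.sqrt (Pg D g) * 1 * 1 * 1 := by
            gcongr <;> positivity
        _ = 1 * |lab z.2 - q z.1| / Real.sqrt (Pg D g) := by ring
        _ ≤ (Real.sqrt (Pg D g))⁻¹ := key
    · have hzS : z ∉ S := hz
      rw [Set.indicator_of_notMem hzS]
      simp [hz]
  have hintb : Integrable (S.indicator fun _ : X × Bool => (Real.sqrt (Pg D g))⁻¹) D :=
    (integrable_const _).indicator hSm
  have hnorm := norm_integral_le_of_norm_le hintb (ae_of_all _ hbound)
  rw [← Real.norm_eq_abs]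
  refine hnorm.trans ?_
  rw [integral_indicator hSm, setIntegral_const, smul_eq_mul]
  have : (D S).toReal = Pg D g := rfl
  rw [measureReal_def, this]
  rcases eq_or_lt_of_le (Pg_nonneg D g) with h0 | h0
  · rw [← h0]; norm_num
  · have : Pg D g * (Real.sqrt (Pg D g))⁻¹ = Real.sqrt (Pg D g) := by
      rw [← div_eq_mul_inv, Real.div_sqrt]
    rw [this, Real.sqrt_le_one]
    exact Pg_le_one D g

/-- Negating `σ` negates the objective. -/
lemma objective_neg (D : Measure (X × Bool)) (v w : ℝ) (h : X → ℝ)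
    {g : X → Bool} (hg : Measurable g) (q : X → ℝ) :
    objective D (-1) v w h g q = - objective D 1 v w h g q := by
  rw [objective_eq_setIntegral D (-1) v w h hg q, objective_eq_setIntegral D 1 v w h hg q]
  ring

/-- The set whose supremum is `supObj`. -/
lemma supObj_set_bddAbove (D : Measure (X × Bool)) [IsProbabilityMeasure D]
    (G : Set (X → Bool)) (hGmeas : ∀ g ∈ G, Measurable g)
    (H : Set (X → ℝ)) (hHmeas : ∀ h ∈ H, Measurable h)
    {q : X → ℝ} (hq : Measurable q) (hqr : ∀ x, q x ∈ Icc (0:ℝ) 1) :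
    ∀ r ∈ {r | ∃ σ ∈ ({1, -1} : Set ℝ), ∃ v ∈ Icc (0:ℝ) 1, ∃ w ∈ Icc (0:ℝ) 1,
      ∃ h ∈ H, ∃ g ∈ G, r = objective D σ v w h g q}, r ≤ 1 := by
  rintro r ⟨σ, hσ, v, hv, w, hw, h, hh, g, hg, rfl⟩
  have hσ' : σ = 1 ∨ σ = -1 := by simpa using hσ
  have := abs_objective_le_one D hσ' v w
    (hHmeas h hh) (hGmeas g hg) hq hqr
  exact (abs_le.mp this).2

lemma supObj_nonneg (D : Measure (X × Bool)) [IsProbabilityMeasure D]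
    (G : Set (X → Bool)) (hGne : G.Nonempty) (hGmeas : ∀ g ∈ G, Measurable g)
    (H : Set (X → ℝ)) (hHne : H.Nonempty) (hHmeas : ∀ h ∈ H, Measurable h)
    {q : X → ℝ} (hq : Measurable q) (hqr : ∀ x, q x ∈ Icc (0:ℝ) 1) :
    0 ≤ supObj D G H q := by
  obtain ⟨h, hh⟩ := hHne
  obtain ⟨g, hg⟩ := hGne
  set A := {r | ∃ σ ∈ ({1, -1} : Set ℝ), ∃ v ∈ Icc (0:ℝ) 1, ∃ w ∈ Icc (0:ℝ) 1,
      ∃ h ∈ H, ∃ g ∈ G, r = objective D σ v w h g q} with hA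
  have hbdd : BddAbove A := ⟨1, fun r hr => supObj_set_bddAbove D G hGmeas H hHmeas hq hqr r hr⟩
  have hmem1 : objective D 1 1 1 h g q ∈ A :=
    ⟨1, by norm_num, 1, by norm_num, 1, by norm_num, h, hh, g, hg, rfl⟩
  have hmem2 : objective D (-1) 1 1 h g q ∈ A :=
    ⟨-1, by norm_num, 1, by norm_num, 1, by norm_num, h, hh, g, hg, rfl⟩
  have h1 : objective D 1 1 1 h g q ≤ supObj D G H q := le_csSup hbdd hmem1
  have h2 : objective D (-1) 1 1 h g q ≤ supObj D G H q := le_csSup hbdd hmem2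
  rw [objective_neg D 1 1 h (hGmeas g hg) q] at h2
  linarith

end Stmt5Aux

namespace Stmt5Aux

variable {X : Type*} [MeasurableSpace X]

/-- The sub-σ-algebra generated by the first coordinate. -/
def mSub (X : Type*) [MeasurableSpace X] : MeasurableSpace (X × Bool) :=
  MeasurableSpace.comap Prod.fst inferInstance

/-- There exists a measurable predictor (the conditional expectation of the label)
for which every objective vanishes. -/
lemma exists_zero_predictor (D : Measure (X × Bool)) [IsProbabilityMeasure D] :
    ∃ q : X → ℝ, Measurable q ∧ (∀ x, q x ∈ Icc (0:ℝ) 1) ∧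
      ∀ (σ v w : ℝ) (h : X → ℝ), Measurable h → ∀ g : X → Bool, Measurable g →
        objective D σ v w h g q = 0 := by
  have hm : mSub X ≤ (Prod.instMeasurableSpace : MeasurableSpace (X × Bool)) :=
    measurable_fst.comap_le
  haveI : SigmaFinite (D.trim hm) := by
    haveI := isFiniteMeasure_trim (μ := D) hm
    infer_instance
  set F : X × Bool → ℝ := fun z => lab z.2 with hF_def
  have hFmeas0 : Measurable (lab ∘ Prod.snd : X × Bool → ℝ) :=
    Measurable.comp measurable_from_top measurable_snd
  have hFmeas : Measurable F := hFmeas0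
  have hFbound : ∀ z, F z ∈ Icc (0:ℝ) 1 := fun z => lab_mem z.2
  have hFint : Integrable F D := by
    refine (integrable_const (1:ℝ)).mono' hFmeas.aestronglyMeasurable (ae_of_all _ fun z => ?_)
    rw [Real.norm_eq_abs, abs_of_nonneg (hFbound z).1]
    exact (hFbound z).2
  set c : X × Bool → ℝ := D[F|mSub X] with hc_def
  have hc_sm : StronglyMeasurable[mSub X] c := stronglyMeasurable_condExp
  have hc_m : Measurable[mSub X] c := hc_sm.measurable
  -- c is constant in the second coordinate
  have hconst : ∀ x b, c (x, b) = c (x, true) := by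
    intro x b
    have hs : MeasurableSet ({c (x, true)} : Set ℝ) := measurableSet_singleton _
    have := hc_m hs
    obtain ⟨A, hA, hAeq⟩ := MeasurableSpace.measurableSet_comap.mp this
    have hx : (x, true) ∈ Prod.fst ⁻¹' A := by
      rw [hAeq]; exact rfl
    have hxb : (x, b) ∈ Prod.fst ⁻¹' A := hx
    have : (x, b) ∈ c ⁻¹' {c (x, true)} := by rw [← hAeq]; exact hxb
    exact this
  set q0 : X → ℝ := fun x => c (x, true) with hq0_def
  have hq0 : Measurable q0 := by
    intro s hs
    have := hc_m hs
    obtain ⟨A, hA, hAeq⟩ := MeasurableSpace.measurableSet_comap.mp this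
    have : q0 ⁻¹' s = A := by
      ext x
      constructor
      · intro hx
        have : (x, true) ∈ c ⁻¹' s := hx
        rw [← hAeq] at this
        exact this
      · intro hx
        have hx' : (x, true) ∈ Prod.fst ⁻¹' A := hx
        rw [hAeq] at hx'
        exact hx'
    rw [this]
    exact hA
  set q : X → ℝ := fun x => max 0 (min 1 (q0 x)) with hq_def
  have hqmeas : Measurable q := measurable_const.max (measurable_const.min hq0)
  have hqrange : ∀ x, q x ∈ Icc (0:ℝ) 1 := by
    intro x
    constructor
    · exact le_max_left _ _
    · apply max_le zero_le_one (min_le_left _ _)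
  -- q ∘ fst agrees a.e. with c
  have hc01 : ∀ᵐ z ∂D, 0 ≤ c z ∧ c z ≤ 1 := by
    have h0 : 0 ≤ᵐ[D] c := condExp_nonneg (ae_of_all _ fun z => (hFbound z).1)
    have h1 : c ≤ᵐ[D] fun _ => (1:ℝ) := by
      have := condExp_mono (m := mSub X) hFint (integrable_const (1:ℝ))
        (ae_of_all _ fun z => (hFbound z).2)
      rwa [condExp_const hm (1:ℝ)] at this
    filter_upwards [h0, h1] with z hz0 hz1
    exact ⟨hz0, hz1⟩
  have hqc : ∀ᵐ z ∂D, q z.1 = c z := by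
    filter_upwards [hc01] with z hz
    have hz' : c z = c (z.1, true) := by
      have := hconst z.1 z.2
      simpa using this
    rw [hq_def]
    simp only
    rw [show q0 z.1 = c z from hz'.symm]
    rw [min_eq_right hz.2, max_eq_right hz.1]
  refine ⟨q, hqmeas, hqrange, ?_⟩
  intro σ v w h hh g hg
  -- the event determined by all three indicators
  set B : Set X := {x | q x ≤ v ∧ h x ≤ w ∧ g x = true} with hB_def
  have hBmeas : MeasurableSet B := by
    apply MeasurableSet.inter
    · exact measurableSet_le hqmeas measurable_const
    apply MeasurableSet.inter
    · exact measurableSet_le hh measurable_const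
    · exact hg (measurableSet_singleton true)
  set A : Set (X × Bool) := Prod.fst ⁻¹' B with hA_def
  have hAmeas : MeasurableSet A := measurable_fst hBmeas
  have hAm : MeasurableSet[mSub X] A :=
    MeasurableSpace.measurableSet_comap.mpr ⟨B, hBmeas, rfl⟩
  -- rewrite the integrand as a scaled indicator
  have hpt : ∀ z : X × Bool,
      σ * (lab z.2 - q z.1) / Real.sqrt (Pg D g) * (if q z.1 ≤ v then 1 else 0) *
        (if h z.1 ≤ w then 1 else 0) * (if g z.1 = true then 1 else 0) =
      (σ / Real.sqrt (Pg D g)) * A.indicator (fun z => F z - q z.1) z := by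
    intro z
    by_cases h1 : q z.1 ≤ v <;> by_cases h2 : h z.1 ≤ w <;> by_cases h3 : g z.1 = true <;>
      simp [Set.indicator, hA_def, hB_def, h1, h2, h3, hF_def] <;> ring
  have hqint : Integrable (fun z : X × Bool => q z.1) D := by
    refine (integrable_const (1:ℝ)).mono'
      ((hqmeas.comp measurable_fst).aestronglyMeasurable) (ae_of_all _ fun z => ?_)
    rw [Real.norm_eq_abs, abs_of_nonneg (hqrange z.1).1]
    exact (hqrange z.1).2
  rw [objective]
  calc ∫ z, σ * (lab z.2 - q z.1) / Real.sqrt (Pg D g) * (if q z.1 ≤ v then 1 else 0) *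
        (if h z.1 ≤ w then 1 else 0) * (if g z.1 = true then 1 else 0) ∂D
      = ∫ z, (σ / Real.sqrt (Pg D g)) * A.indicator (fun z => F z - q z.1) z ∂D := by
        congr 1; funext z; exact hpt z
    _ = (σ / Real.sqrt (Pg D g)) * ∫ z, A.indicator (fun z => F z - q z.1) z ∂D :=
        integral_const_mul _ _
    _ = (σ / Real.sqrt (Pg D g)) * ∫ z in A, (F z - q z.1) ∂D := by
        rw [integral_indicator hAmeas]
    _ = (σ / Real.sqrt (Pg D g)) * (∫ z in A, F z ∂D - ∫ z in A, q z.1 ∂D) := by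
        rw [integral_sub hFint.restrict hqint.restrict]
    _ = 0 := by
        have e1 : ∫ z in A, q z.1 ∂D = ∫ z in A, c z ∂D := by
          apply setIntegral_congr_ae hAmeas
          filter_upwards [hqc] with z hz _
          exact hz
        have e2 : ∫ z in A, c z ∂D = ∫ z in A, F z ∂D :=
          setIntegral_condExp hm hFint hAm
        rw [e1, e2, sub_self, mul_zero]

end Stmt5Aux

/-- An `ε`-optimal solution to the step-calibration multi-objective
learning problem is `(G, H, ε)`-step calibrated. -/
theorem stmt5 {X : Type*} [MeasurableSpace X]
    (D : Measure (X × Bool)) [IsProbabilityMeasure D]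
    (ε : ℝ)
    (G : Set (X → Bool)) (hGne : G.Nonempty) (hGmeas : ∀ g ∈ G, Measurable g)
    (hGpos : ∀ g ∈ G, 0 < Pg D g)
    (H : Set (X → ℝ)) (hHne : H.Nonempty) (hHmeas : ∀ h ∈ H, Measurable h)
    (hHrange : ∀ h ∈ H, ∀ x, h x ∈ Icc (0:ℝ) 1)
    (p : X → ℝ) (hpmeas : Measurable p) (hprange : ∀ x, p x ∈ Icc (0:ℝ) 1)
    -- ε-optimality over the class P of all measurable predictors into [0,1]
    (hopt : supObj D G H p ≤
      sInf {r | ∃ q : X → ℝ, Measurable q ∧ (∀ x, q x ∈ Icc (0:ℝ) 1) ∧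
        r = supObj D G H q} + ε) :
    -- conclusion: (G, H, ε)-step calibration
    ∀ v ∈ Icc (0:ℝ) 1, ∀ w ∈ Icc (0:ℝ) 1, ∀ h ∈ H, ∀ g ∈ G,
      |condE D g (fun z => (lab z.2 - p z.1) * (if p z.1 ≤ v then 1 else 0) *
        (if h z.1 ≤ w then 1 else 0))| ≤ ε * Real.sqrt (1 / Pg D g) := by
  intro v hv w hw h hh g hg
  have hgm : Measurable g := hGmeas g hg
  have hhm : Measurable h := hHmeas h hh
  have hPg : 0 < Pg D g := hGpos g hg
  have hsqrt : 0 < Real.sqrt (Pg D g) := Real.sqrt_pos.mpr hPg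
  -- Step 1: sInf of the optimization set is ≤ 0
  obtain ⟨q, hqm, hqr, hqzero⟩ := Stmt5Aux.exists_zero_predictor D
  have hsupq : supObj D G H q = 0 := by
    rw [supObj]
    have hset : {r | ∃ σ ∈ ({1, -1} : Set ℝ), ∃ v ∈ Icc (0:ℝ) 1, ∃ w ∈ Icc (0:ℝ) 1,
        ∃ h ∈ H, ∃ g ∈ G, r = objective D σ v w h g q} = {0} := by
      ext r
      constructor
      · rintro ⟨σ, hσ, v', hv', w', hw', h', hh', g', hg', rfl⟩
        exact hqzero σ v' w' h' (hHmeas h' hh') g' (hGmeas g' hg')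
      · rintro rfl
        exact ⟨1, by norm_num, 1, by norm_num, 1, by norm_num, h, hh, g, hg,
          (hqzero 1 1 1 h hhm g hgm).symm⟩
    rw [hset, csSup_singleton]
  have hInf_le : sInf {r | ∃ q : X → ℝ, Measurable q ∧ (∀ x, q x ∈ Icc (0:ℝ) 1) ∧
      r = supObj D G H q} ≤ 0 := by
    apply csInf_le
    · refine ⟨0, ?_⟩
      rintro r ⟨q', hq'm, hq'r, rfl⟩
      exact Stmt5Aux.supObj_nonneg D G hGne hGmeas H hHne hHmeas hq'm hq'r
    · exact ⟨q, hqm, hqr, hsupq.symm⟩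
  have hsup_p : supObj D G H p ≤ ε := by linarith
  -- Step 2: both objectives at ±1 are ≤ supObj p
  have hbdd : BddAbove {r | ∃ σ ∈ ({1, -1} : Set ℝ), ∃ v ∈ Icc (0:ℝ) 1, ∃ w ∈ Icc (0:ℝ) 1,
      ∃ h ∈ H, ∃ g ∈ G, r = objective D σ v w h g p} :=
    ⟨1, fun r hr => Stmt5Aux.supObj_set_bddAbove D G hGmeas H hHmeas hpmeas hprange r hr⟩
  have h1 : objective D 1 v w h g p ≤ supObj D G H p :=
    le_csSup hbdd ⟨1, by norm_num, v, hv, w, hw, h, hh, g, hg, rfl⟩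
  have h2 : objective D (-1) v w h g p ≤ supObj D G H p :=
    le_csSup hbdd ⟨-1, by norm_num, v, hv, w, hw, h, hh, g, hg, rfl⟩
  rw [Stmt5Aux.objective_neg D v w h hgm p] at h2
  have habs : |objective D 1 v w h g p| ≤ ε := by
    rw [abs_le]; constructor <;> linarith
  -- Step 3: relate the objective at σ = 1 to condE
  set S := {z : X × Bool | g z.1 = true} with hS
  set f : X × Bool → ℝ := fun z => (lab z.2 - p z.1) * (if p z.1 ≤ v then 1 else 0) *
      (if h z.1 ≤ w then 1 else 0) with hf
  have hPgdef : Pg D g = (D S).toReal := rfl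
  have hDS0 : D S ≠ 0 := by
    intro h0
    rw [hPgdef, h0] at hPg
    simp at hPg
  have hDStop : D S ≠ ⊤ := measure_ne_top D S
  have hcondE : condE D g f = (Pg D g)⁻¹ * ∫ z in S, f z ∂D := by
    rw [condE, ProbabilityTheory.cond, integral_smul_measure, smul_eq_mul,
      ENNReal.toReal_inv]
    rfl
  have hobj : objective D 1 v w h g p = (1 / Real.sqrt (Pg D g)) * ∫ z in S, f z ∂D :=
    Stmt5Aux.objective_eq_setIntegral D 1 v w h hgm p
  have hrel : objective D 1 v w h g p = Real.sqrt (Pg D g) * condE D g f := by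
    rw [hobj, hcondE, ← mul_assoc]
    congr 1
    rw [one_div, eq_comm, mul_inv_eq_iff_eq_mul₀ (ne_of_gt hPg), eq_comm, mul_comm,
      ← div_eq_mul_inv, Real.div_sqrt]
  -- conclude
  have : Real.sqrt (Pg D g) * |condE D g f| ≤ ε := by
    calc Real.sqrt (Pg D g) * |condE D g f| = |objective D 1 v w h g p| := by
          rw [hrel, abs_mul, abs_of_nonneg hsqrt.le]
      _ ≤ ε := habs
  have hfin : |condE D g f| ≤ ε / Real.sqrt (Pg D g) := by
    rw [le_div_iff₀ hsqrt]
    linarith [this]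
  calc |condE D g f| ≤ ε / Real.sqrt (Pg D g) := hfin
    _ = ε * Real.sqrt (1 / Pg D g) := by
        rw [one_div, Real.sqrt_inv, div_eq_mul_inv]

end
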